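/- arXiv:2108.03209 — 4 statements merged into one kernel-verified Lean document; each statement's English description precedes it below -/
import Mathlib

section
/- Let N ≥ 2 be an integer and x* > 0, y* > 0 real numbers satisfying (x*)²/N ≤ y* ≤ (x*)². Define p = (x*/N)·[1 − √(1 − (1 − y*/(x*)²)·(N/(N−1)))] and q = x* − (N−1)p. Then p ≥ 0, q ≥ 0, and the dose vector (q, p, p, …, p) ∈ ℝ^N (with N−1 copies of p) satisfies q + (N−1)p = x* and q² + (N−1)p² = y*. -/
/-- Dose-recovery formula: from (x*, y*) with (x*)²/N ≤ y* ≤ (x*)², the schedule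
(q, p, ..., p) is nonnegative and reproduces the total dose and sum of squares. -/
theorem dose_recovery
    (N : ℕ) (hN : 2 ≤ N) (x y : ℝ) (hx : 0 < x) (hy : 0 < y)
    (h1 : x ^ 2 / (N : ℝ) ≤ y) (h2 : y ≤ x ^ 2) :
    let p : ℝ := (x / N) * (1 - Real.sqrt (1 - (1 - y / x ^ 2) * ((N : ℝ) / ((N : ℝ) - 1))))
    let q : ℝ := x - ((N : ℝ) - 1) * p
    0 ≤ p ∧ 0 ≤ q ∧ q + ((N : ℝ) - 1) * p = x ∧ q ^ 2 + ((N : ℝ) - 1) * p ^ 2 = y := by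
  intro p q
  have hN1 : (2:ℝ) ≤ (N:ℝ) := by exact_mod_cast hN
  set n : ℝ := (N:ℝ) with hn
  have hn0 : 0 < n := by linarith
  have hn1 : 0 < n - 1 := by linarith
  have hx2 : (0:ℝ) < x ^ 2 := by positivity
  have hAeq : 1 - (1 - y / x ^ 2) * (n / (n - 1)) = (n * y - x ^ 2) / (x ^ 2 * (n - 1)) := by
    field_simp
    ring
  have hnum : 0 ≤ n * y - x ^ 2 := by
    have := (div_le_iff₀ hn0).mp h1
    linarith
  have hA0 : 0 ≤ 1 - (1 - y / x ^ 2) * (n / (n - 1)) := by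
    rw [hAeq]
    positivity
  have hA1 : 1 - (1 - y / x ^ 2) * (n / (n - 1)) ≤ 1 := by
    have h1y : 0 ≤ 1 - y / x ^ 2 := by
      rw [sub_nonneg, div_le_one hx2]; exact h2
    nlinarith [mul_nonneg h1y (div_nonneg hn0.le hn1.le)]
  set s : ℝ := Real.sqrt (1 - (1 - y / x ^ 2) * (n / (n - 1))) with hs
  have hs0 : 0 ≤ s := Real.sqrt_nonneg _
  have hs1 : s ≤ 1 := Real.sqrt_le_one.mpr hA1
  have hs2 : s ^ 2 = (n * y - x ^ 2) / (x ^ 2 * (n - 1)) := by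
    rw [hs, Real.sq_sqrt hA0, hAeq]
  have hp : p = (x / n) * (1 - s) := rfl
  have hp0 : 0 ≤ p := by
    rw [hp]
    have : 0 ≤ 1 - s := by linarith
    positivity
  have hq : q = (x / n) * (1 + (n - 1) * s) := by
    show x - (n - 1) * p = _
    rw [hp]
    field_simp
    ring
  have hq0 : 0 ≤ q := by
    rw [hq]
    have : 0 ≤ 1 + (n - 1) * s := by nlinarith
    positivity
  refine ⟨hp0, hq0, by show x - (n-1)*p + (n-1)*p = x; ring, ?_⟩
  rw [hq, hp]
  have key : (x / n * (1 + (n - 1) * s)) ^ 2 + (n - 1) * (x / n * (1 - s)) ^ 2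
      = (x ^ 2 / n) * (1 + (n - 1) * s ^ 2) := by
    field_simp
    ring
  rw [key, hs2]
  field_simp
  ring
end

section
/- Let x ≥ 0, y ≥ 0, ρ > 0, B > 0, and N ≥ 1, and let b(N) = (−1 + √(1 + 4ρB/N))/(2ρ). If x + ρy ≤ B and y ≥ x²/N, then x ≤ N·b(N). Equivalently, the total dose of any nonnegative N-fraction schedule whose BED for an organ with parameter ρ is at most B cannot exceed N·b(N). -/
/-- The total dose of any nonnegative N-fraction schedule whose BED for an organ
with parameter ρ is at most B cannot exceed N·b(N). -/
theorem total_dose_le_N_b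
    (x y ρ B : ℝ) (N : ℕ) (hN : 1 ≤ N)
    (hx : 0 ≤ x) (hy : 0 ≤ y) (hρ : 0 < ρ) (hB : 0 < B)
    (hBED : x + ρ * y ≤ B) (hCS : x ^ 2 / (N : ℝ) ≤ y) :
    x ≤ (N : ℝ) * ((-1 + Real.sqrt (1 + 4 * ρ * B / N)) / (2 * ρ)) := by
  have hN0 : (0:ℝ) < N := by exact_mod_cast hN
  have h1 : x + ρ * (x ^ 2 / N) ≤ B := by nlinarith [mul_le_mul_of_nonneg_left hCS hρ.le]
  have h2 : x * N + ρ * x ^ 2 ≤ B * N := by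
    have := mul_le_mul_of_nonneg_right h1 hN0.le
    field_simp at this
    linarith
  have hsq : (1 + 2 * ρ * x / N) ^ 2 ≤ 1 + 4 * ρ * B / N := by
    have e1 : 1 + 2 * ρ * x / N = (N + 2 * ρ * x) / N := by field_simp
    have e2 : 1 + 4 * ρ * B / N = (N ^ 2 + 4 * ρ * B * N) / N ^ 2 := by
      field_simp
    rw [e1, e2, div_pow, div_le_div_iff₀ (by positivity) (by positivity)]
    nlinarith [mul_le_mul_of_nonneg_right h2 hN0.le, sq_nonneg x, mul_pos hρ hN0]
  have hpos : 0 < 1 + 2 * ρ * x / N := by positivity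
  have hs : 1 + 2 * ρ * x / N ≤ Real.sqrt (1 + 4 * ρ * B / N) :=
    (Real.le_sqrt' hpos).mpr hsq
  rw [mul_div_assoc', le_div_iff₀ (by positivity)]
  have := mul_le_mul_of_nonneg_left hs hN0.le
  have hc : (N:ℝ) * (2 * ρ * x / N) = 2 * ρ * x := by field_simp
  nlinarith [this, hc]
end

section
/- Fix N ≥ 1 and suppose the thresholds D₁²/N₁ ≤ … ≤ D_n²/N_n are sorted. For 0 ≤ k ≤ n−1, if a dose vector d ≥ 0 is feasible to the k-th subproblem constraints with the boundary equality Σ d_t² = D_{k+1}²/N_{k+1} (replacing the strict inequality Σ d_t² < D_{k+1}²/N_{k+1} by equality), then d is feasible to the (k+1)-st subproblem, i.e., it satisfies Σ d_t + ρmax_m Σ d_t² ≤ D_m + ρmax_m D_m²/N_m for m ≤ k+1, Σ d_t + ρmin_m Σ d_t² ≤ D_m + ρmin_m D_m²/N_m for m ≥ k+2, Σ d_t² ≥ D_{k+1}²/N_{k+1}, and Σ d_t² ≤ D_{k+2}²/N_{k+2} (when k+2 ≤ n). -/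
/-- If a nonnegative dose vector is feasible for the k-th subproblem with the
upper boundary satisfied with equality Σ d_t² = D_{k+1}²/N_{k+1}, then it is
feasible for the (k+1)-st subproblem. (Organs are 0-indexed: the (k+1)-st
organ of the paper has index k here.) -/
theorem boundary_equality_feasible_next_subproblem
    (n NF : ℕ) (ρmin ρmax D Nm : Fin n → ℝ)
    (hρmin : ∀ m, 0 < ρmin m) (hρ : ∀ m, ρmin m ≤ ρmax m)
    (hD : ∀ m, 0 < D m) (hNm : ∀ m, 0 < Nm m)
    (hsorted : Monotone (fun m : Fin n => D m ^ 2 / Nm m))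
    (k : ℕ) (hkn : k < n)
    (d : Fin NF → ℝ) (hd : ∀ t, 0 ≤ d t)
    (hmax : ∀ m : Fin n, (m : ℕ) < k →
      (∑ t, d t) + ρmax m * (∑ t, d t ^ 2) ≤ D m + ρmax m * (D m ^ 2 / Nm m))
    (hmin : ∀ m : Fin n, k ≤ (m : ℕ) →
      (∑ t, d t) + ρmin m * (∑ t, d t ^ 2) ≤ D m + ρmin m * (D m ^ 2 / Nm m))
    (hlow : ∀ hk0 : 0 < k, D ⟨k - 1, lt_trans (Nat.sub_lt hk0 one_pos) hkn⟩ ^ 2 /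
      Nm ⟨k - 1, lt_trans (Nat.sub_lt hk0 one_pos) hkn⟩ ≤ (∑ t, d t ^ 2))
    (heq : (∑ t, d t ^ 2) = D ⟨k, hkn⟩ ^ 2 / Nm ⟨k, hkn⟩) :
    (∀ m : Fin n, (m : ℕ) < k + 1 →
      (∑ t, d t) + ρmax m * (∑ t, d t ^ 2) ≤ D m + ρmax m * (D m ^ 2 / Nm m)) ∧
    (∀ m : Fin n, k + 1 ≤ (m : ℕ) →
      (∑ t, d t) + ρmin m * (∑ t, d t ^ 2) ≤ D m + ρmin m * (D m ^ 2 / Nm m)) ∧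
    (D ⟨k, hkn⟩ ^ 2 / Nm ⟨k, hkn⟩ ≤ (∑ t, d t ^ 2)) ∧
    (∀ hk1 : k + 1 < n, (∑ t, d t ^ 2) ≤ D ⟨k + 1, hk1⟩ ^ 2 / Nm ⟨k + 1, hk1⟩) := by
  have hkfin : ((⟨k, hkn⟩ : Fin n) : ℕ) = k := rfl
  have hminK := hmin ⟨k, hkn⟩ (le_of_eq hkfin.symm)
  refine ⟨?_, ?_, le_of_eq heq.symm, ?_⟩
  · intro m hm
    rcases Nat.lt_succ_iff_lt_or_eq.mp hm with h | h
    · exact hmax m h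
    · have hmk : m = ⟨k, hkn⟩ := Fin.ext h
      subst hmk
      rw [heq] at hminK ⊢
      have hsd : ∑ t, d t ≤ D (⟨k, hkn⟩ : Fin n) := by nlinarith [hρmin (⟨k, hkn⟩ : Fin n)]
      nlinarith
  · intro m hm
    exact hmin m (le_of_lt hm)
  · intro hk1
    have := hsorted (show (⟨k, hkn⟩ : Fin n) ≤ ⟨k+1, hk1⟩ from Nat.le_succ k)
    rw [heq]; exact this
end

section
/- Let d ≥ 0 be a dose vector in ℝ^N feasible for all robust constraints: for every m ∈ {1,…,n} and every ρ̃_m ∈ [ρmin_m, ρmax_m], Σ d_t + ρ̃_m(Σ d_t² − D_m²/N_m) ≤ D_m. Then there exists k ∈ {0,1,…,n} such that d is feasible for the k-th subproblem with non-strict inequalities: Σ d_t + ρmax_m Σ d_t² ≤ D_m + ρmax_m D_m²/N_m for m ≤ k, Σ d_t + ρmin_m Σ d_t² ≤ D_m + ρmin_m D_m²/N_m for m > k, and D_k²/N_k ≤ Σ d_t² ≤ D_{k+1}²/N_{k+1} (with the convention D_0²/N_0 = 0 and D_{n+1}²/N_{n+1} = +∞). Conversely, any d feasible for some subproblem k is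 feasible for all robust constraints. -/
/-- The feasible region of the robust fractionation constraints equals the union
of the n+1 subproblem feasible regions (with non-strict inequalities, and the
conventions D_0²/N_0 = 0, D_{n+1}²/N_{n+1} = +∞ encoded conditionally). -/
theorem robust_feasible_iff_some_subproblem
    (n NF : ℕ) (ρmin ρmax D Nm : Fin n → ℝ)
    (hρmin : ∀ m, 0 < ρmin m) (hρ : ∀ m, ρmin m ≤ ρmax m)
    (hD : ∀ m, 0 < D m) (hNm : ∀ m, 0 < Nm m)
    (hsorted : Monotone (fun m : Fin n => D m ^ 2 / Nm m))
    (d : Fin NF → ℝ) (hd : ∀ t, 0 ≤ d t) :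
    (∀ m : Fin n, ∀ ρ : ℝ, ρmin m ≤ ρ → ρ ≤ ρmax m →
        (∑ t, d t) + ρ * ((∑ t, d t ^ 2) - D m ^ 2 / Nm m) ≤ D m) ↔
    (∃ k : ℕ, k ≤ n ∧
      (∀ m : Fin n, (m : ℕ) < k →
        (∑ t, d t) + ρmax m * (∑ t, d t ^ 2) ≤ D m + ρmax m * (D m ^ 2 / Nm m)) ∧
      (∀ m : Fin n, k ≤ (m : ℕ) →
        (∑ t, d t) + ρmin m * (∑ t, d t ^ 2) ≤ D m + ρmin m * (D m ^ 2 / Nm m)) ∧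
      (∀ h : k - 1 < n, 0 < k →
        D ⟨k - 1, h⟩ ^ 2 / Nm ⟨k - 1, h⟩ ≤ (∑ t, d t ^ 2)) ∧
      (∀ h : k < n, (∑ t, d t ^ 2) ≤ D ⟨k, h⟩ ^ 2 / Nm ⟨k, h⟩)) := by
  classical
  set L := ∑ t, d t with hL
  set S := ∑ t, d t ^ 2 with hS
  constructor
  · intro hrob
    have hex : ∃ j, j = n ∨ ∃ h : j < n, S ≤ D ⟨j, h⟩ ^ 2 / Nm ⟨j, h⟩ :=
      ⟨n, Or.inl rfl⟩
    set k := Nat.find hex with hk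
    have hkspec := Nat.find_spec hex
    have hkn : k ≤ n := by
      rcases hkspec with h | ⟨h, _⟩
      · omega
      · omega
    refine ⟨k, hkn, ?_, ?_, ?_, ?_⟩
    · intro m _
      have h := hrob m (ρmax m) (hρ m) le_rfl
      nlinarith [h]
    · intro m _
      have h := hrob m (ρmin m) le_rfl (hρ m)
      nlinarith [h]
    · intro h h0
      have hmin := Nat.find_min hex (show k - 1 < k by omega)
      push_neg at hmin
      have := hmin.2 h
      linarith
    · intro h
      rcases hkspec with heq | ⟨h', hle⟩
      · omega
      · exact hle
  · rintro ⟨k, hkn, hmaxc, hminc, hlo, hhi⟩ m ρ hρ1 hρ2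
    by_cases hm : (m : ℕ) < k
    · have hk1 : k - 1 < n := by omega
      have h0k : 0 < k := by omega
      have hTS : D m ^ 2 / Nm m ≤ S := by
        refine le_trans ?_ (hlo hk1 h0k)
        exact hsorted (show m ≤ ⟨k - 1, hk1⟩ from by
          simp only [Fin.le_def]; omega)
      have hmx := hmaxc m hm
      nlinarith [mul_le_mul_of_nonneg_right hρ2 (sub_nonneg.mpr hTS)]
    · have hkm : k ≤ (m : ℕ) := by omega
      have hk' : k < n := lt_of_le_of_lt hkm m.isLt
      have hST : S ≤ D m ^ 2 / Nm m := by
        refine le_trans (hhi hk') ?_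
        exact hsorted (show (⟨k, hk'⟩ : Fin n) ≤ m from by
          simp only [Fin.le_def]; omega)
      have hmn := hminc m hkm
      nlinarith [mul_le_mul_of_nonpos_right hρ1 (sub_nonpos.mpr hST)]
end
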